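/- Let A be the set of bounded complex-valued functions f on ℝ such that {x : f(x) ≠ 0} is countable. Then A is a monotone σ-complete C*-algebra (under pointwise operations and sup norm) that has no unit element; consequently A is not a Rickart C*-algebra. -/

import Mathlib

set_option synthInstance.maxHeartbeats 1000000
set_option maxHeartbeats 1000000


open scoped ENNReal

/-- The C*-algebra `B(ℝ)` of all bounded complex-valued functions on `ℝ`. -/
noncomputable abbrev BddFun : Type := lp (fun _ : ℝ => ℂ) ∞

/-- The order induced by the positive cone `{h* h}`. -/
def cleBdd (f g : BddFun) : Prop := ∃ h : BddFun, g - f = star h * h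

open Complex in
lemma apply_of_cleBdd {f g : BddFun} (h : cleBdd f g) (x : ℝ) :
    (g x - f x).im = 0 ∧ 0 ≤ (g x - f x).re := by
  obtain ⟨H, hH⟩ := h
  have h1 : (g - f) x = (star H * H) x := by rw [hH]
  rw [lp.coeFn_sub] at h1
  have h2 : (star H * H) x = star (H x) * H x := by
    rw [lp.infty_coeFn_mul, Pi.mul_apply, lp.coeFn_star, Pi.star_apply]
  have h3 : star (H x) * H x = ((Complex.normSq (H x) : ℝ) : ℂ) := by
    rw [Complex.star_def, mul_comm, Complex.mul_conj]
  have : g x - f x = ((Complex.normSq (H x) : ℝ) : ℂ) := by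
    have := h1.trans (h2.trans h3)
    simpa using this
  rw [this]
  simp [Complex.normSq_nonneg]

open Complex in
lemma cleBdd_of_pointwise {f g : BddFun} (hf : ∀ x, (f x).im = 0) (hg : ∀ x, (g x).im = 0)
    (hle : ∀ x, (f x).re ≤ (g x).re) : cleBdd f g := by
  have hev : ∀ (u : BddFun) (x : ℝ), ‖u x‖ ≤ ‖u‖ :=
    fun u x => lp.norm_apply_le_norm ENNReal.top_ne_zero u x
  set d : ℝ → ℝ := fun x => (g x).re - (f x).re with hd
  have hd0 : ∀ x, 0 ≤ d x := fun x => sub_nonneg.2 (hle x)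
  have hdle : ∀ x, d x ≤ ‖g‖ + ‖f‖ := by
    intro x
    have h1 : (g x).re ≤ ‖g‖ := le_trans (le_trans (le_abs_self _)
      (by simpa using Complex.abs_re_le_norm (g x))) (hev g x)
    have h2 : -(f x).re ≤ ‖f‖ := le_trans (le_trans (neg_le_abs _)
      (by simpa using Complex.abs_re_le_norm (f x))) (hev f x)
    simp only [hd]; linarith
  have hmem : Memℓp (fun x => ((Real.sqrt (d x) : ℝ) : ℂ)) ∞ := by
    apply memℓp_infty
    refine ⟨Real.sqrt (‖g‖ + ‖f‖), ?_⟩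
    rintro r ⟨x, rfl⟩
    show ‖((Real.sqrt (d x) : ℝ) : ℂ)‖ ≤ Real.sqrt (‖g‖ + ‖f‖)
    rw [Complex.norm_real, Real.norm_eq_abs, _root_.abs_of_nonneg (Real.sqrt_nonneg _)]
    exact Real.sqrt_le_sqrt (hdle x)
  refine ⟨⟨_, hmem⟩, ?_⟩
  apply lp.ext
  funext x
  have hHx : ((⟨_, hmem⟩ : BddFun) x) = ((Real.sqrt (d x) : ℝ) : ℂ) := rfl
  rw [lp.coeFn_sub, Pi.sub_apply, lp.infty_coeFn_mul, Pi.mul_apply, lp.coeFn_star,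
    Pi.star_apply, hHx, Complex.star_def, Complex.conj_ofReal]
  rw [← Complex.ofReal_mul, Real.mul_self_sqrt (hd0 x)]
  apply Complex.ext <;> simp [hd, hf x, hg x]

theorem countable_support_algebra_properties :
    let A : Set BddFun := {f | Set.Countable {x : ℝ | f x ≠ 0}}
    -- A is a norm-closed *-subalgebra (so a C*-algebra)
    ((0 : BddFun) ∈ A ∧ (∀ f ∈ A, ∀ g ∈ A, f + g ∈ A) ∧
      (∀ (c : ℂ), ∀ f ∈ A, c • f ∈ A) ∧ (∀ f ∈ A, ∀ g ∈ A, f * g ∈ A) ∧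
      (∀ f ∈ A, star f ∈ A) ∧ IsClosed A) ∧
    -- A is monotone σ-complete
    (∀ a : ℕ → BddFun, (∀ n, a n ∈ A) → (∀ n, star (a n) = a n) →
      (∀ n, cleBdd (a n) (a (n + 1))) → (∃ c : ℝ, ∀ n, ‖a n‖ ≤ c) →
      ∃ b ∈ A, star b = b ∧ (∀ n, cleBdd (a n) b) ∧
        ∀ x ∈ A, star x = x → (∀ n, cleBdd (a n) x) → cleBdd b x) ∧
    -- A has no unit
    (¬∃ e ∈ A, ∀ f ∈ A, e * f = f ∧ f * e = f) ∧
    -- consequently A is not a Rickart C*-algebra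
    ¬(∀ a ∈ A, ∃ p ∈ A, star p = p ∧ p * p = p ∧
        {z | z ∈ A ∧ a * z = 0} = {w | ∃ z ∈ A, w = p * z}) := by
  intro A
  have hev : ∀ (u : BddFun) (x : ℝ), ‖u x‖ ≤ ‖u‖ :=
    fun u x => lp.norm_apply_le_norm ENNReal.top_ne_zero u x
  -- membership criteria
  have hmemA : ∀ (f : BddFun), Set.Countable {x : ℝ | f x ≠ 0} → f ∈ A := fun _ h => h
  have h0A : (0 : BddFun) ∈ A := by
    apply hmemA
    have : {x : ℝ | (0 : BddFun) x ≠ 0} = ∅ := by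
      ext x; simp [lp.coeFn_zero]
    rw [this]; exact Set.countable_empty
  -- no-unit, proved first for reuse
  have hnounit : ¬∃ e ∈ A, ∀ f ∈ A, e * f = f ∧ f * e = f := by
    rintro ⟨e, heA, he⟩
    have hall : ∀ x : ℝ, e x = 1 := by
      intro x
      have hm : Memℓp (fun y : ℝ => if y = x then (1 : ℂ) else 0) ∞ := by
        apply memℓp_infty
        refine ⟨1, ?_⟩
        rintro r ⟨y, rfl⟩
        by_cases h : y = x <;> simp [h]
      set δ : BddFun := ⟨_, hm⟩ with hδ
      have hδapp : ∀ y, δ y = if y = x then (1 : ℂ) else 0 := fun _ => rfl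
      have hδA : δ ∈ A := by
        apply hmemA
        apply Set.Countable.mono _ (Set.countable_singleton x)
        intro y hy
        by_contra h
        simp only [Set.mem_singleton_iff] at h
        exact hy (by simp [hδapp, h])
      have h1 := (he δ hδA).1
      have h2 : (e * δ) x = δ x := by rw [h1]
      rw [lp.infty_coeFn_mul, Pi.mul_apply, hδapp] at h2
      simpa using h2
    have : {x : ℝ | e x ≠ 0} = Set.univ := by
      ext x; simp [hall x]
    rw [Set.mem_setOf_eq, this] at heA
    exact Cardinal.not_countable_real heA
  refine ⟨⟨h0A, ?_, ?_, ?_, ?_, ?_⟩, ?_, hnounit, ?_⟩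
  · -- addition
    intro f hf g hg
    apply hmemA
    apply Set.Countable.mono _ (hf.union hg)
    intro x hx
    by_contra h
    simp only [Set.mem_union, Set.mem_setOf_eq, not_or, not_not] at h
    apply hx
    rw [lp.coeFn_add, Pi.add_apply, h.1, h.2, add_zero]
  · -- smul
    intro c f hf
    apply hmemA
    apply Set.Countable.mono _ hf
    intro x hx
    by_contra h
    simp only [Set.mem_setOf_eq, not_not] at h
    apply hx
    rw [lp.coeFn_smul, Pi.smul_apply, h, smul_zero]
  · -- mul
    intro f hf g hg
    apply hmemA
    apply Set.Countable.mono _ hg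
    intro x hx
    by_contra h
    simp only [Set.mem_setOf_eq, not_not] at h
    apply hx
    rw [lp.infty_coeFn_mul, Pi.mul_apply, h, mul_zero]
  · -- star
    intro f hf
    apply hmemA
    apply Set.Countable.mono _ hf
    intro x hx
    by_contra h
    simp only [Set.mem_setOf_eq, not_not] at h
    apply hx
    rw [lp.coeFn_star, Pi.star_apply, h, star_zero]
  · -- closedness
    apply IsSeqClosed.isClosed
    intro u f hu hlim
    apply hmemA
    have hsub : {x : ℝ | f x ≠ 0} ⊆ ⋃ n, {x : ℝ | u n x ≠ 0} := by
      intro x hx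
      have hpos : 0 < ‖f x‖ := norm_pos_iff.2 hx
      obtain ⟨N, hN⟩ := Metric.tendsto_atTop.mp hlim ‖f x‖ hpos
      have hd := hN N le_rfl
      rw [dist_eq_norm] at hd
      refine Set.mem_iUnion.2 ⟨N, ?_⟩
      intro h0
      have hle : ‖(u N - f) x‖ ≤ ‖u N - f‖ := hev _ x
      rw [lp.coeFn_sub, Pi.sub_apply, h0, zero_sub, norm_neg] at hle
      exact absurd (lt_of_le_of_lt hle hd) (lt_irrefl _)
    exact Set.Countable.mono hsub (Set.countable_iUnion fun n => hu n)
  · -- monotone σ-completeness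
    intro a haA hsa hmono hbd
    obtain ⟨c, hc⟩ := hbd
    have him : ∀ n x, (a n x).im = 0 := by
      intro n x
      have h1 : (star (a n)) x = a n x := by rw [hsa n]
      rw [lp.coeFn_star, Pi.star_apply, Complex.star_def] at h1
      exact Complex.conj_eq_iff_im.mp h1
    have hrle : ∀ n x, (a n x).re ≤ (a (n + 1) x).re := by
      intro n x
      have := (apply_of_cleBdd (hmono n) x).2
      rw [Complex.sub_re] at this
      linarith
    have habs : ∀ n x, |(a n x).re| ≤ c := by
      intro n x
      calc |(a n x).re| ≤ ‖a n x‖ := by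
            simpa using Complex.abs_re_le_norm (a n x)
        _ ≤ ‖a n‖ := hev _ x
        _ ≤ c := hc n
    have hbdd : ∀ x, BddAbove (Set.range fun n => (a n x).re) := by
      intro x
      exact ⟨c, by rintro r ⟨n, rfl⟩; exact (abs_le.mp (habs n x)).2⟩
    set r : ℝ → ℝ := fun x => ⨆ n, (a n x).re with hr
    have hler : ∀ n x, (a n x).re ≤ r x := fun n x => le_ciSup (hbdd x) n
    have hrabs : ∀ x, |r x| ≤ c := by
      intro x
      rw [abs_le]
      constructor
      · linarith [(abs_le.mp (habs 0 x)).1, hler 0 x]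
      · exact ciSup_le fun n => (abs_le.mp (habs n x)).2
    have hmem : Memℓp (fun x => ((r x : ℝ) : ℂ)) ∞ := by
      apply memℓp_infty
      exact ⟨c, by rintro s ⟨x, rfl⟩; simpa [Complex.norm_real] using hrabs x⟩
    set b : BddFun := ⟨_, hmem⟩ with hb
    have hbapp : ∀ x, b x = ((r x : ℝ) : ℂ) := fun _ => rfl
    have hbim : ∀ x, (b x).im = 0 := fun x => by rw [hbapp]; simp
    refine ⟨b, ?_, ?_, ?_, ?_⟩
    · -- b ∈ A
      apply hmemA
      have hsub : {x : ℝ | b x ≠ 0} ⊆ ⋃ n, {x : ℝ | a n x ≠ 0} := by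
        intro x hx
        by_contra h
        simp only [Set.mem_iUnion, Set.mem_setOf_eq, not_exists, not_not] at h
        apply hx
        have : ∀ n, (a n x).re = 0 := fun n => by rw [h n]; simp
        rw [hbapp]
        simp only [hr]
        rw [show (fun n => (a n x).re) = fun _ => (0 : ℝ) from funext this]
        simp
      exact Set.Countable.mono hsub (Set.countable_iUnion fun n => haA n)
    · -- star b = b
      apply lp.ext
      funext x
      rw [lp.coeFn_star, Pi.star_apply, hbapp, Complex.star_def, Complex.conj_ofReal]
    · -- upper bound
      intro n
      apply cleBdd_of_pointwise (him n) hbim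
      intro x
      rw [hbapp]; simpa using hler n x
    · -- least upper bound
      intro x hxA hxsa hub
      have hxim : ∀ y, (x y).im = 0 := by
        intro y
        have h1 : (star x) y = x y := by rw [hxsa]
        rw [lp.coeFn_star, Pi.star_apply, Complex.star_def] at h1
        exact Complex.conj_eq_iff_im.mp h1
      apply cleBdd_of_pointwise hbim hxim
      intro y
      rw [hbapp]
      simp only [Complex.ofReal_re, hr]
      apply ciSup_le
      intro n
      have := (apply_of_cleBdd (hub n) y).2
      rw [Complex.sub_re] at this
      linarith
  · -- not Rickart
    intro h
    obtain ⟨p, hpA, hpstar, hpidem, hpset⟩ := h 0 h0A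
    apply hnounit
    refine ⟨p, hpA, ?_⟩
    have hmemP : ∀ f ∈ A, p * f = f := by
      intro f hf
      have hfin : f ∈ {z | z ∈ A ∧ (0 : BddFun) * z = 0} := ⟨hf, zero_mul f⟩
      rw [hpset] at hfin
      obtain ⟨z, hz, rfl⟩ := hfin
      rw [← mul_assoc, hpidem]
    intro f hf
    refine ⟨hmemP f hf, ?_⟩
    apply lp.ext
    funext y
    have h1 : (p * f) y = f y := by rw [hmemP f hf]
    rw [lp.infty_coeFn_mul, Pi.mul_apply] at h1
    rw [lp.infty_coeFn_mul, Pi.mul_apply, mul_comm]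
    exact h1
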